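/- Let ω be an open set in ℝⁿ, q ∈ {0,…,n−1}, and let u : ω → [−∞,+∞) be upper semicontinuous. Then u is real q-convex on ω if and only if u is locally real q-convex on ω, i.e., for every point p ∈ ω there exists an open neighborhood V of p with V ⊆ ω such that the restriction of u to V is real q-convex on V. -/

import Mathlib

open Metric Set Filter

noncomputable section

/-- An upper semicontinuous function `u : ω → [−∞,+∞)` (EReal-valued, never `⊤` on `ω`)
is *real q-convex* on `ω` if it satisfies the local maximum property with respect to
affine linear functions on real `(q+1)`-dimensional affine subspaces. -/
def RealQConvexOn {E : Type*} [NormedAddCommGroup E] [NormedSpace ℝ E]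
    (q : ℕ) (u : E → EReal) (ω : Set E) : Prop :=
  (∀ x ∈ ω, u x ≠ ⊤) ∧ UpperSemicontinuousOn u ω ∧
    ∀ P : AffineSubspace ℝ E, Module.finrank ℝ P.direction = q + 1 →
      ∀ (c : E) (r : ℝ), 0 < r → closure (Metric.ball c r) ⊆ ω →
        ∀ l : E →ᵃ[ℝ] ℝ,
          (∀ x ∈ Metric.sphere c r ∩ (P : Set E), u x ≤ (l x : EReal)) →
          ∀ x ∈ Metric.closedBall c r ∩ (P : Set E), u x ≤ (l x : EReal)

private lemma ereal_sub_le_iff {x : EReal} {s m : ℝ} :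
    x - (s : EReal) ≤ (m : EReal) ↔ x ≤ ((s + m : ℝ) : EReal) := by
  induction x with
  | bot => simp [EReal.bot_sub]
  | coe t =>
      rw [show ((t : EReal) - s) = ((t - s : ℝ) : EReal) by rw [EReal.coe_sub],
        EReal.coe_le_coe_iff, EReal.coe_le_coe_iff]
      constructor <;> intro h <;> linarith
  | top => rw [EReal.top_sub_coe]; simp only [top_le_iff, EReal.coe_ne_top]

private lemma ereal_le_sub_iff {x : EReal} {s m : ℝ} :
    (m : EReal) ≤ x - (s : EReal) ↔ ((s + m : ℝ) : EReal) ≤ x := by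
  induction x with
  | bot => simp [EReal.bot_sub, le_bot_iff, EReal.coe_ne_bot]
  | coe t =>
      rw [show ((t : EReal) - s) = ((t - s : ℝ) : EReal) by rw [EReal.coe_sub],
        EReal.coe_le_coe_iff, EReal.coe_le_coe_iff]
      constructor <;> intro h <;> linarith
  | top => simp [EReal.top_sub_coe]

private lemma ereal_sub_lt_iff {x : EReal} {s m : ℝ} :
    x - (s : EReal) < (m : EReal) ↔ x < ((s + m : ℝ) : EReal) := by
  rw [← not_le, ← not_le, ereal_le_sub_iff]

private lemma ereal_lt_sub_iff {x : EReal} {s m : ℝ} :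
    (m : EReal) < x - (s : EReal) ↔ ((s + m : ℝ) : EReal) < x := by
  rw [← not_le, ← not_le, ereal_sub_le_iff]

private lemma ereal_sub_coe_lt_top {x : EReal} (hx : x ≠ ⊤) (s : ℝ) : x - (s : EReal) < ⊤ := by
  induction x with
  | bot => rw [EReal.bot_sub]; exact bot_lt_top
  | coe t =>
      rw [show ((t : EReal) - s) = ((t - s : ℝ) : EReal) by rw [EReal.coe_sub]]
      exact EReal.coe_lt_top _
  | top => exact absurd rfl hx

/-- An `EReal`-valued function that is upper semicontinuous on a set, never `⊤` there,
minus a continuous real function, is upper semicontinuous on the set. -/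
private lemma usc_sub {X : Type*} [TopologicalSpace X] {K : Set X} {u : X → EReal}
    (hu : UpperSemicontinuousOn u K) (htop : ∀ y ∈ K, u y ≠ ⊤)
    {l : X → ℝ} (hl : Continuous l) :
    UpperSemicontinuousOn (fun y => u y - (l y : EReal)) K := by
  intro z hz a ha
  induction a with
  | bot => exact absurd ha (by simp)
  | coe m =>
      have h1 : u z < ((l z + m : ℝ) : EReal) := ereal_sub_lt_iff.mp ha
      obtain ⟨b, hb1, hb2⟩ := EReal.lt_iff_exists_real_btwn.mp h1
      have hblt : b < l z + m := EReal.coe_lt_coe_iff.mp hb2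
      have hev1 : ∀ᶠ y in nhdsWithin z K, u y < (b : EReal) := hu z hz _ hb1
      have hev2 : ∀ᶠ y in nhdsWithin z K, b - m < l y := by
        have hc : ContinuousWithinAt l K z := hl.continuousAt.continuousWithinAt
        exact hc (Ioi_mem_nhds (by linarith : b - m < l z))
      filter_upwards [hev1, hev2] with y hy1 hy2
      exact ereal_sub_lt_iff.mpr (lt_of_lt_of_le hy1 (EReal.coe_le_coe_iff.mpr (by linarith)))
  | top =>
      filter_upwards [eventually_mem_nhdsWithin] with y hy
      exact ereal_sub_coe_lt_top (htop y hy) _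

/-- An upper semicontinuous `EReal`-valued function attains its maximum on a
nonempty compact set. -/
private lemma usc_exists_max {X : Type*} [TopologicalSpace X] {K : Set X} (hK : IsCompact K)
    (hne : K.Nonempty) {f : X → EReal} (hf : UpperSemicontinuousOn f K) :
    ∃ z ∈ K, ∀ y ∈ K, f y ≤ f z := by
  by_contra hcon
  push_neg at hcon
  have key : ∀ z : K, ∃ y : X, y ∈ K ∧ ∃ U : Set X, IsOpen U ∧ (z : X) ∈ U ∧
      ∀ w ∈ U ∩ K, f w < f y := by
    rintro ⟨z, hz⟩
    obtain ⟨y, hyK, hlt⟩ := hcon z hz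
    obtain ⟨U, hUo, hzU, hsub⟩ := mem_nhdsWithin.mp (hf z hz (f y) hlt)
    exact ⟨y, hyK, U, hUo, hzU, fun w hw => hsub ⟨hw.1, hw.2⟩⟩
  choose y hyK U hUo hzU hUlt using key
  obtain ⟨t, ht⟩ := hK.elim_finite_subcover U hUo
    (fun w hw => mem_iUnion.mpr ⟨⟨w, hw⟩, hzU ⟨w, hw⟩⟩)
  have htne : t.Nonempty := by
    obtain ⟨w, hw⟩ := hne
    have := ht hw
    simp only [mem_iUnion, exists_prop] at this
    obtain ⟨i, hit, _⟩ := this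
    exact ⟨i, hit⟩
  obtain ⟨i₀, hi₀t, hmax⟩ := t.exists_max_image (fun i => f (y i)) htne
  have hyK0 : y i₀ ∈ K := hyK i₀
  have hmem := ht hyK0
  simp only [mem_iUnion, exists_prop] at hmem
  obtain ⟨i, hit, hyU⟩ := hmem
  exact absurd (hmax i hit) (not_le.mpr (hUlt i (y i₀) ⟨hyU, hyK0⟩))

/-- Superlevel sets (within a closed set) of an upper semicontinuous function are closed. -/
private lemma usc_closed_superlevel {X : Type*} [TopologicalSpace X] {K : Set X}
    (hK : IsClosed K) {f : X → EReal} (hf : UpperSemicontinuousOn f K) (c : EReal) :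
    IsClosed {y ∈ K | c ≤ f y} := by
  rw [← isOpen_compl_iff, isOpen_iff_forall_mem_open]
  intro z hz
  by_cases hzK : z ∈ K
  · have hlt : f z < c := by
      by_contra h
      exact hz ⟨hzK, not_lt.mp h⟩
    obtain ⟨U, hUo, hzU, hsub⟩ := mem_nhdsWithin.mp (hf z hzK c hlt)
    refine ⟨U, fun w hw hmem => ?_, hUo, hzU⟩
    exact absurd hmem.2 (not_le.mpr (hsub ⟨hw, hmem.1⟩))
  · exact ⟨Kᶜ, fun w hw hmem => hw hmem.1, hK.isOpen_compl, hzK⟩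

/-- Real q-convexity is a local property: an upper semicontinuous function is
real q-convex on an open set `ω ⊆ ℝⁿ` iff it is locally real q-convex on `ω`. -/
theorem realQConvexOn_iff_locally {n q : ℕ} (hq : q < n)
    (ω : Set (EuclideanSpace ℝ (Fin n))) (hω : IsOpen ω)
    (u : EuclideanSpace ℝ (Fin n) → EReal)
    (husc : UpperSemicontinuousOn u ω) (htop : ∀ x ∈ ω, u x ≠ ⊤) :
    RealQConvexOn q u ω ↔
      ∀ p ∈ ω, ∃ V, IsOpen V ∧ p ∈ V ∧ V ⊆ ω ∧ RealQConvexOn q u V := by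
  constructor
  · intro h p hp
    exact ⟨ω, hω, hp, subset_rfl, h⟩
  intro hloc
  refine ⟨htop, husc, ?_⟩
  intro P hP c r hr hsub l hsph x hx
  by_contra hcon
  rw [not_le] at hcon
  have hPcl : IsClosed (P : Set (EuclideanSpace ℝ (Fin n))) :=
    AffineSubspace.closed_of_finiteDimensional P
  have hcb : closedBall c r ⊆ ω := by
    rw [← closure_ball c (ne_of_gt hr)]; exact hsub
  set K : Set (EuclideanSpace ℝ (Fin n)) := closedBall c r ∩ (P : Set _) with hK_def
  have hKω : K ⊆ ω := fun y hy => hcb hy.1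
  have hKcl : IsClosed K := Metric.isClosed_closedBall.inter hPcl
  have hKcomp : IsCompact K := (isCompact_closedBall c r).inter_right hPcl
  have huK : UpperSemicontinuousOn u K := husc.mono hKω
  have htopK : ∀ y ∈ K, u y ≠ ⊤ := fun y hy => htop y (hKω hy)
  have hlc : Continuous l := l.continuous_of_finiteDimensional
  set g : EuclideanSpace ℝ (Fin n) → EReal := fun y => u y - (l y : EReal) with hg_def
  have hgK : UpperSemicontinuousOn g K := usc_sub huK htopK hlc
  obtain ⟨z₀, hz₀K, hz₀max⟩ := usc_exists_max hKcomp ⟨x, hx⟩ hgK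
  -- the maximum `M > 0`
  have hgx : ((0 : ℝ) : EReal) < g x :=
    ereal_lt_sub_iff.mpr (by rw [add_zero]; exact hcon)
  have hgz₀ : ((0 : ℝ) : EReal) < g z₀ := lt_of_lt_of_le hgx (hz₀max x hx)
  have hgz₀top : g z₀ ≠ ⊤ := (ereal_sub_coe_lt_top (htopK z₀ hz₀K) _).ne
  have hgz₀bot : g z₀ ≠ ⊥ := ne_bot_of_gt hgz₀
  set M : ℝ := (g z₀).toReal with hM_def
  have hgM : g z₀ = (M : EReal) := (EReal.coe_toReal hgz₀top hgz₀bot).symm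
  have hMpos : 0 < M := by
    rw [hgM] at hgz₀
    exact_mod_cast hgz₀
  have hbound : ∀ y ∈ K, u y ≤ ((l y + M : ℝ) : EReal) := fun y hy =>
    ereal_sub_le_iff.mp ((hz₀max y hy).trans_eq hgM)
  -- the set of maximizers
  set A : Set (EuclideanSpace ℝ (Fin n)) := {y ∈ K | ((l y + M : ℝ) : EReal) ≤ u y} with hA_def
  have hAcl : IsClosed A := by
    have hAeq : A = {y ∈ K | (M : EReal) ≤ g y} := by
      ext y
      simp only [hA_def, mem_setOf_eq]
      exact and_congr_right fun _ => ereal_le_sub_iff.symm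
    rw [hAeq]
    exact usc_closed_superlevel hKcl hgK _
  have hAcomp : IsCompact A := hKcomp.of_isClosed_subset hAcl (sep_subset _ _)
  have hz₀A : z₀ ∈ A := ⟨hz₀K, ereal_le_sub_iff.mp (le_of_eq hgM.symm)⟩
  obtain ⟨x₀, hx₀A, hx₀max⟩ := hAcomp.exists_isMaxOn ⟨z₀, hz₀A⟩
    ((continuous_id.sub continuous_const).norm.continuousOn :
      ContinuousOn (fun y => ‖y - c‖) A)
  set a : ℝ := ‖x₀ - c‖ with ha_def
  have hx₀K : x₀ ∈ K := hx₀A.1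
  have hx₀ω : x₀ ∈ ω := hKω hx₀K
  have hx₀P : x₀ ∈ (P : Set (EuclideanSpace ℝ (Fin n))) := hx₀K.2
  have hux₀ : u x₀ = ((l x₀ + M : ℝ) : EReal) := le_antisymm (hbound x₀ hx₀K) hx₀A.2
  have ha0 : 0 ≤ a := norm_nonneg _
  have har : a ≤ r := by
    have := hx₀K.1
    rwa [mem_closedBall, dist_eq_norm] at this
  have halt : a < r := by
    rcases lt_or_eq_of_le har with h | h
    · exact h
    · exfalso
      have hx₀sph : x₀ ∈ sphere c r ∩ (P : Set (EuclideanSpace ℝ (Fin n))) :=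
        ⟨by rwa [mem_sphere, dist_eq_norm], hx₀P⟩
      have h1 := hsph x₀ hx₀sph
      rw [hux₀] at h1
      have h2 : l x₀ + M ≤ l x₀ := EReal.coe_le_coe_iff.mp h1
      linarith
  -- local real q-convexity near x₀
  obtain ⟨V, hVo, hx₀V, hVω, hVconv⟩ := hloc x₀ hx₀ω
  obtain ⟨ρ₀, hρ₀pos, hρ₀V⟩ := Metric.isOpen_iff.mp hVo x₀ hx₀V
  set ρ : ℝ := min (ρ₀ / 2) (r - a) with hρ_def
  have hρpos : 0 < ρ := lt_min (by linarith) (by linarith)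
  have hρle : ρ ≤ r - a := min_le_right _ _
  have hρV : closedBall x₀ ρ ⊆ V :=
    (closedBall_subset_ball (lt_of_le_of_lt (min_le_left _ _) (by linarith))).trans hρ₀V
  set w : EuclideanSpace ℝ (Fin n) := x₀ - c with hw_def
  have hwn : ‖w‖ = a := rfl
  -- sphere points lie in K
  have hKsub : ∀ y ∈ sphere x₀ ρ ∩ (P : Set (EuclideanSpace ℝ (Fin n))), y ∈ K := by
    rintro y ⟨hy1, hy2⟩
    refine ⟨?_, hy2⟩
    rw [mem_closedBall]
    have h1 : dist y x₀ = ρ := mem_sphere.mp hy1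
    have h2 : dist x₀ c = a := dist_eq_norm _ _
    calc dist y c ≤ dist y x₀ + dist x₀ c := dist_triangle _ _ _
      _ = ρ + a := by rw [h1, h2]
      _ ≤ r := by linarith
  have hnormsq : ∀ y ∈ sphere x₀ ρ, ‖y - c‖ ^ 2 = ρ ^ 2 + 2 * (inner ℝ (y - x₀) w : ℝ) + a ^ 2 := by
    intro y hy
    have h1 : ‖y - x₀‖ = ρ := by
      rw [← dist_eq_norm]; exact mem_sphere.mp hy
    have h2 : y - c = (y - x₀) + w := by rw [hw_def]; abel
    rw [h2, norm_add_sq_real, h1, hwn]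
  -- strict bound on the "outer cap" C
  set C : Set (EuclideanSpace ℝ (Fin n)) :=
    sphere x₀ ρ ∩ (P : Set _) ∩ {y | -(ρ ^ 2 / 4) ≤ (inner ℝ (y - x₀) w : ℝ)} with hC_def
  have hinnercont : Continuous fun y : EuclideanSpace ℝ (Fin n) => (inner ℝ (y - x₀) w : ℝ) :=
    (continuous_id.sub continuous_const).inner continuous_const
  have hCK : C ⊆ K := fun y hy => hKsub y hy.1
  have hCcomp : IsCompact C :=
    (((isCompact_sphere x₀ ρ).inter_right hPcl).inter_right
      (isClosed_le continuous_const hinnercont))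
  have hCstrict : ∀ y ∈ C, u y < ((l y + M : ℝ) : EReal) := by
    intro y hy
    have hyK : y ∈ K := hCK hy
    have hysph : y ∈ sphere x₀ ρ := hy.1.1
    have hlt : a < ‖y - c‖ := by
      have h1 := hnormsq y hysph
      have h2 : -(ρ ^ 2 / 4) ≤ (inner ℝ (y - x₀) w : ℝ) := hy.2
      refine lt_of_pow_lt_pow_left₀ 2 (norm_nonneg _) ?_
      nlinarith
    have hyA : y ∉ A := fun hmem => absurd (hx₀max hmem) (not_le.mpr hlt)
    exact lt_of_le_of_ne (hbound y hyK) (fun heq => hyA ⟨hyK, le_of_eq heq.symm⟩)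
  have hδ : ∃ δ : ℝ, 0 < δ ∧ ∀ y ∈ C, u y ≤ ((l y + (M - δ) : ℝ) : EReal) := by
    rcases eq_empty_or_nonempty C with hCe | hCne
    · exact ⟨1, one_pos, fun y hy => absurd hy (by rw [hCe]; exact notMem_empty y)⟩
    · obtain ⟨z₁, hz₁C, hz₁max⟩ := usc_exists_max hCcomp hCne (hgK.mono hCK)
      have hz₁lt : g z₁ < (M : EReal) :=
        ereal_sub_lt_iff.mpr (hCstrict z₁ hz₁C)
      obtain ⟨b, hb1, hb2⟩ := EReal.lt_iff_exists_real_btwn.mp hz₁lt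
      have hbM : b < M := EReal.coe_lt_coe_iff.mp hb2
      refine ⟨M - b, by linarith, fun y hy => ?_⟩
      have h1 : g y < (b : EReal) := lt_of_le_of_lt (hz₁max y hy) hb1
      have h2 : u y ≤ ((l y + b : ℝ) : EReal) := le_of_lt (ereal_sub_lt_iff.mp h1)
      have h3 : l y + b = l y + (M - (M - b)) := by ring
      rwa [h3] at h2
  obtain ⟨δ, hδpos, hδbound⟩ := hδ
  -- the perturbed affine function
  have hDpos : 0 < ρ * a + ρ ^ 2 / 4 + 1 := by
    nlinarith [mul_nonneg hρpos.le ha0, sq_nonneg ρ]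
  obtain ⟨α, hαneg, hαD⟩ : ∃ α : ℝ, α < 0 ∧ α * (ρ * a + ρ ^ 2 / 4 + 1) = -δ := by
    refine ⟨-(δ / (ρ * a + ρ ^ 2 / 4 + 1)), ?_, ?_⟩
    · exact neg_neg_iff_pos.mpr (div_pos hδpos hDpos)
    · field_simp
  obtain ⟨β, hβneg, hβdef⟩ : ∃ β : ℝ, β < 0 ∧ β = α * (ρ ^ 2 / 4) :=
    ⟨α * (ρ ^ 2 / 4), mul_neg_of_neg_of_pos hαneg (by positivity), rfl⟩
  have hexp : α * (ρ * a) + α * (ρ ^ 2 / 4) + α = -δ := by linear_combination hαD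
  set l' : EuclideanSpace ℝ (Fin n) →ᵃ[ℝ] ℝ :=
    l + (α • (innerSL ℝ w).toLinearMap).toAffineMap
      + AffineMap.const ℝ _ (M + β - α * (inner ℝ w x₀ : ℝ)) with hl'_def
  have hl'eval : ∀ y, l' y = l y + M + α * (inner ℝ (y - x₀) w : ℝ) + β := by
    intro y
    have hsplit : (inner ℝ (y - x₀) w : ℝ) = inner ℝ w y - inner ℝ w x₀ := by
      rw [inner_sub_left, real_inner_comm y w, real_inner_comm x₀ w]
    simp only [hl'_def, AffineMap.coe_add, AffineMap.coe_const, Pi.add_apply,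
      Function.const_apply, LinearMap.coe_toAffineMap, LinearMap.smul_apply,
      ContinuousLinearMap.coe_coe, innerSL_apply_apply, smul_eq_mul]
    rw [hsplit]
    ring
  -- hypothesis of local q-convexity on the small sphere
  have hhyp : ∀ y ∈ sphere x₀ ρ ∩ (P : Set (EuclideanSpace ℝ (Fin n))),
      u y ≤ ((l' y : ℝ) : EReal) := by
    rintro y ⟨hy1, hy2⟩
    have hyK : y ∈ K := hKsub y ⟨hy1, hy2⟩
    have hyρ : ‖y - x₀‖ = ρ := by rw [← dist_eq_norm]; exact mem_sphere.mp hy1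
    have habs : |(inner ℝ (y - x₀) w : ℝ)| ≤ ρ * a := by
      have := abs_real_inner_le_norm (y - x₀) w
      rwa [hyρ, hwn] at this
    rcases le_or_gt (-(ρ ^ 2 / 4)) (inner ℝ (y - x₀) w : ℝ) with hc | hc
    · have h1 := hδbound y ⟨⟨hy1, hy2⟩, hc⟩
      refine h1.trans (EReal.coe_le_coe_iff.mpr ?_)
      rw [hl'eval y]
      have h2 : α * (ρ * a) ≤ α * (inner ℝ (y - x₀) w : ℝ) :=
        mul_le_mul_of_nonpos_left (le_of_abs_le habs) hαneg.le
      linarith [h2, hexp, hβdef, hαneg.le]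
    · have h1 := hbound y hyK
      refine h1.trans (EReal.coe_le_coe_iff.mpr ?_)
      rw [hl'eval y]
      have h2 : α * (-(ρ ^ 2 / 4)) ≤ α * (inner ℝ (y - x₀) w : ℝ) :=
        mul_le_mul_of_nonpos_left hc.le hαneg.le
      have h3 : α * (-(ρ ^ 2 / 4)) = -β := by rw [hβdef]; ring
      linarith
  -- apply local q-convexity at x₀
  have hclos : closure (ball x₀ ρ) ⊆ V := by
    rw [closure_ball x₀ (ne_of_gt hρpos)]; exact hρV
  have hfinal := hVconv.2.2 P hP x₀ ρ hρpos hclos l' hhyp x₀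
    ⟨mem_closedBall_self hρpos.le, hx₀P⟩
  rw [hux₀, hl'eval x₀] at hfinal
  have h0 : (inner ℝ (x₀ - x₀) w : ℝ) = 0 := by simp
  rw [h0] at hfinal
  have hle : l x₀ + M ≤ l x₀ + M + α * 0 + β := EReal.coe_le_coe_iff.mp hfinal
  linarith
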